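/- Let n ≥ 9, p the largest prime with p² ≤ n, and x ∈ A_n a product of k ∈ {1,2} disjoint p²-cycles (with n = k·p² + r, 0 ≤ r < p²). Then every prime dividing |A_n| divides the conjugacy class size of x in A_n. -/

import Mathlib

open Equiv Equiv.Perm

section KB
variable {α : Type*} [Fintype α] [DecidableEq α]

lemma aux_card_dvd_ker_mul {G H : Type*} [Group G] [Group H] [Finite H] (f : G →* H) :
    Nat.card G ∣ Nat.card f.ker * Nat.card H := by
  rw [Subgroup.card_eq_card_quotient_mul_card_subgroup f.ker, mul_comm]
  exact Nat.mul_dvd_mul_left _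
    ((Nat.card_congr (QuotientGroup.quotientKerEquivRange f).toEquiv) ▸
      Subgroup.card_subgroup_dvd_card f.range)

lemma ker_bound (g : Equiv.Perm α) {K : Type*} [Group K] (π : K →* Equiv.Perm α)
    (hinj : Function.Injective π)
    (hcomm : ∀ c : K, ∀ f ∈ g.cycleFactorsFinset, Commute (π c) f)
    (hfix : ∀ c : K, ∀ a : α, a ∉ g.support → π c a = a) :
    Nat.card K ∣ ∏ f : {f : Perm α // f ∈ g.cycleFactorsFinset}, (f : Perm α).support.card := by
  classical
  have hIsC : ∀ f : {f : Perm α // f ∈ g.cycleFactorsFinset}, (f : Perm α).IsCycle :=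
    fun f => (mem_cycleFactorsFinset_iff.mp f.2).1
  have hsi : ∀ (c : K) (f : {f : Perm α // f ∈ g.cycleFactorsFinset}) (a : α),
      π c a ∈ (f : Perm α).support ↔ a ∈ (f : Perm α).support :=
    fun c f a => mem_support_iff_of_commute (hcomm c f.1 f.2) a
  have hz : ∀ (c : K) (f : {f : Perm α // f ∈ g.cycleFactorsFinset}),
      ofSubtype ((π c).subtypePerm (hsi c f)) ∈ Subgroup.zpowers (f : Perm α) := by
    intro c f
    obtain ⟨h', hm⟩ := (hIsC f).commute_iff.mp (hcomm c f.1 f.2)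
    exact hm
  have heval : ∀ (c : K) (f : {f : Perm α // f ∈ g.cycleFactorsFinset}) (a : α),
      ofSubtype ((π c).subtypePerm (hsi c f)) a = if a ∈ (f : Perm α).support then π c a else a := by
    intro c f a
    by_cases ha : a ∈ (f : Perm α).support
    · rw [if_pos ha, ofSubtype_apply_of_mem _ ha, subtypePerm_apply]
    · rw [if_neg ha, ofSubtype_apply_of_not_mem _ ha]
  let θ : K → ∀ f : {f : Perm α // f ∈ g.cycleFactorsFinset}, Subgroup.zpowers (f : Perm α) :=
    fun c => fun f => ⟨ofSubtype ((π c).subtypePerm (hsi c f)), hz c f⟩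
  have hθmul : ∀ c d : K, θ (c * d) = θ c * θ d := by
    intro c d
    funext f
    refine Subtype.ext ?_
    show ofSubtype ((π (c * d)).subtypePerm (hsi (c * d) f)) =
      ofSubtype ((π c).subtypePerm (hsi c f)) * ofSubtype ((π d).subtypePerm (hsi d f))
    ext a
    rw [Perm.mul_apply, heval, heval, heval]
    by_cases ha : a ∈ (f : Perm α).support
    · rw [if_pos ha, if_pos ha, if_pos ((hsi d f a).mpr ha)]
      simp
    · rw [if_neg ha, if_neg ha, if_neg ha]
  let Θ : K →* (∀ f : {f : Perm α // f ∈ g.cycleFactorsFinset}, Subgroup.zpowers (f : Perm α)) :=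
    MonoidHom.mk' θ hθmul
  have hΘinj : Function.Injective Θ := by
    rw [injective_iff_map_eq_one]
    intro c hc
    apply hinj
    rw [map_one]
    ext a
    by_cases ha : a ∈ g.support
    · have hf : g.cycleOf a ∈ g.cycleFactorsFinset := cycleOf_mem_cycleFactorsFinset_iff.mpr ha
      have ha' : a ∈ (g.cycleOf a).support :=
        mem_support_cycleOf_iff.mpr ⟨Equiv.Perm.SameCycle.refl _ _, ha⟩
      have h1 : θ c ⟨g.cycleOf a, hf⟩ = 1 := by
        rw [show θ c = Θ c from rfl, hc]; rfl
      have h2 : ofSubtype ((π c).subtypePerm (hsi c ⟨g.cycleOf a, hf⟩)) = 1 :=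
        congrArg Subtype.val h1
      have h3 := Equiv.Perm.congr_fun h2 a
      rw [heval, if_pos ha'] at h3
      simpa using h3
    · simp [hfix c a ha]
  calc Nat.card K ∣ Nat.card (∀ f : {f : Perm α // f ∈ g.cycleFactorsFinset},
        Subgroup.zpowers (f : Perm α)) := Subgroup.card_dvd_of_injective Θ hΘinj
    _ = ∏ f : {f : Perm α // f ∈ g.cycleFactorsFinset}, (f : Perm α).support.card := by
        rw [Nat.card_pi]
        exact Finset.prod_congr rfl fun f _ => by
          rw [Nat.card_zpowers, (hIsC f).orderOf]

lemma centralizer_card_dvd (g : Equiv.Perm α) (k m : ℕ)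
    (hg : g.cycleType = Multiset.replicate k m) :
    Nat.card (Subgroup.centralizer {g}) ∣
      m ^ k * k.factorial * (Fintype.card α - k * m).factorial := by
  classical
  set C := Subgroup.centralizer {g} with hC
  have comm : ∀ c : C, Commute (c : Perm α) g := fun c =>
    Subgroup.mem_centralizer_singleton_iff.mp c.2
  have hsupp : g.support.card = k * m := by
    rw [← sum_cycleType, hg, Multiset.sum_replicate, smul_eq_mul]
  have hfk : g.cycleFactorsFinset.card = k := by
    have h1 := congrArg Multiset.card (cycleType_def g)
    rw [hg, Multiset.card_replicate, Multiset.card_map] at h1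
    exact h1.symm
  -- Φ : restriction to the complement of the support
  have hinv : ∀ c : C, ∀ a : α,
      ((c : Perm α) a ∉ g.support) ↔ (a ∉ g.support) := fun c a =>
    not_iff_not.mpr (mem_support_iff_of_commute (comm c) a)
  let Φ : C →* Perm {a : α // a ∉ g.support} :=
    { toFun := fun c => subtypePerm (c : Perm α) (hinv c)
      map_one' := by ext a; rfl
      map_mul' := fun c d => by ext a; rfl }
  -- Ψ : action on cycle factors
  have hconj : ∀ c : Φ.ker, ∀ f : Perm α,
      f ∈ g.cycleFactorsFinset ↔
        ((c : C) : Perm α) * f * ((c : C) : Perm α)⁻¹ ∈ g.cycleFactorsFinset := by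
    intro c f
    have hcg : ((c : C) : Perm α) * g * ((c : C) : Perm α)⁻¹ = g := by
      rw [(comm (c : C)).eq, mul_inv_cancel_right]
    conv_lhs => rw [← mem_cycleFactorsFinset_conj g ((c : C) : Perm α) f]
    rw [hcg]
  let Ψ : Φ.ker →* Perm {f : Perm α // f ∈ g.cycleFactorsFinset} :=
    { toFun := fun c => Equiv.subtypeEquiv (MulAut.conj ((c : C) : Perm α)).toEquiv (hconj c)
      map_one' := by
        ext f
        simp [Equiv.subtypeEquiv]
      map_mul' := fun c d => by
        ext f
        simp [Equiv.subtypeEquiv, mul_assoc] }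
  -- ker Ψ bound via ker_bound
  let π : Ψ.ker →* Perm α := C.subtype.comp ((Φ.ker.subtype.comp Ψ.ker.subtype))
  have hπinj : Function.Injective π :=
    C.subtype_injective.comp ((Φ.ker.subtype_injective).comp Ψ.ker.subtype_injective)
  have hπcomm : ∀ c : Ψ.ker, ∀ f ∈ g.cycleFactorsFinset, Commute (π c) f := by
    intro c f hf
    have hker : Ψ (c : Φ.ker) = 1 := c.2
    have h1 := Equiv.Perm.congr_fun hker ⟨f, hf⟩
    have h2 : (((c : Φ.ker) : C) : Perm α) * f * (((c : Φ.ker) : C) : Perm α)⁻¹ = f := by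
      simpa [Ψ, Equiv.subtypeEquiv, Subtype.ext_iff] using h1
    have : π c = (((c : Φ.ker) : C) : Perm α) := rfl
    rw [this]
    exact mul_inv_eq_iff_eq_mul.mp h2
  have hπfix : ∀ c : Ψ.ker, ∀ a : α, a ∉ g.support → π c a = a := by
    intro c a ha
    have hker : Φ ((c : Φ.ker) : C) = 1 := (c : Φ.ker).2
    have h1 := Equiv.Perm.congr_fun hker ⟨a, ha⟩
    simpa [Φ, π, Subtype.ext_iff] using h1
  have hkerΨ : Nat.card Ψ.ker ∣ m ^ k := by
    have h := ker_bound g π hπinj hπcomm hπfix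
    have hval : ∀ f : {f : Perm α // f ∈ g.cycleFactorsFinset}, (f : Perm α).support.card = m := by
      intro f
      have : (f : Perm α).support.card ∈ g.cycleType := by
        rw [cycleType_def]
        exact Multiset.mem_map_of_mem _ f.2
      rw [hg] at this
      exact Multiset.eq_of_mem_replicate this
    rwa [Finset.prod_congr rfl (fun f _ => hval f), Finset.prod_const, Finset.card_univ,
      Fintype.card_coe, hfk] at h
  have hcards : Nat.card (Perm {f : Perm α // f ∈ g.cycleFactorsFinset}) = k.factorial := by
    rw [Nat.card_eq_fintype_card, Fintype.card_perm, Fintype.card_coe, hfk]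
  have hcardc : Nat.card (Perm {a : α // a ∉ g.support}) = (Fintype.card α - k * m).factorial := by
    rw [Nat.card_eq_fintype_card, Fintype.card_perm, Fintype.card_subtype_compl,
      Fintype.card_coe, hsupp]
  have d1 : Nat.card C ∣ Nat.card Φ.ker * (Fintype.card α - k * m).factorial := by
    have := aux_card_dvd_ker_mul Φ
    rwa [hcardc] at this
  have d2 : Nat.card Φ.ker ∣ Nat.card Ψ.ker * k.factorial := by
    have := aux_card_dvd_ker_mul Ψ
    rwa [hcards] at this
  calc Nat.card C ∣ Nat.card Φ.ker * (Fintype.card α - k * m).factorial := d1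
    _ ∣ (Nat.card Ψ.ker * k.factorial) * (Fintype.card α - k * m).factorial :=
        Nat.mul_dvd_mul_right d2 _
    _ ∣ (m ^ k * k.factorial) * (Fintype.card α - k * m).factorial :=
        Nat.mul_dvd_mul_right (Nat.mul_dvd_mul_right hkerΨ _) _
end KB

lemma arith_main (n p k r q : ℕ) (hp : p.Prime) (hq : q.Prime) (hp3 : 3 ≤ p)
    (hk : k = 1 ∨ k = 2) (hnkr : n = k * p ^ 2 + r) (hr : r < p ^ 2) (hqn : q ∣ n.factorial) :
    padicValNat q 2 + padicValNat q ((p ^ 2) ^ k * k.factorial * r.factorial) + 1 ≤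
      padicValNat q n.factorial := by
  haveI : Fact q.Prime := ⟨hq⟩
  set m := k * p ^ 2 with hm
  have hk1 : 1 ≤ k := by rcases hk with rfl | rfl <;> norm_num
  have hp0 : 0 < p := hp.pos
  have hpm : p ^ 2 ≤ m := Nat.le_mul_of_pos_left _ hk1
  have hm9 : 9 ≤ m := le_trans (by nlinarith : 9 ≤ p ^ 2) hpm
  have hm0 : m ≠ 0 := by omega
  have hdvd_le : ∀ a b : ℕ, a ∣ b → b ≠ 0 → padicValNat q a ≤ padicValNat q b := by
    rintro a b ⟨t, rfl⟩ hb
    have ha : a ≠ 0 := by rintro rfl; simp at hb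
    have ht : t ≠ 0 := by rintro rfl; simp at hb
    rw [padicValNat.mul ha ht]
    exact Nat.le_add_right _ _
  have hsplit : padicValNat q m.factorial + padicValNat q r.factorial ≤
      padicValNat q n.factorial := by
    have h1 : m.factorial * r.factorial ∣ n.factorial := by
      rw [hnkr]; exact Nat.factorial_mul_factorial_dvd_factorial_add m r
    calc padicValNat q m.factorial + padicValNat q r.factorial
        = padicValNat q (m.factorial * r.factorial) := by
          rw [padicValNat.mul m.factorial_ne_zero r.factorial_ne_zero]
      _ ≤ padicValNat q n.factorial := hdvd_le _ _ h1 n.factorial_ne_zero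
  have hlhs : padicValNat q ((p ^ 2) ^ k * k.factorial * r.factorial) =
      2 * k * padicValNat q p + padicValNat q k.factorial + padicValNat q r.factorial := by
    rw [padicValNat.mul (by positivity) r.factorial_ne_zero,
      padicValNat.mul (by positivity) k.factorial_ne_zero]
    rw [← pow_mul, padicValNat.pow _ _]
  rw [hlhs]
  -- case analysis on q
  rcases eq_or_ne q 2 with rfl | hq2
  · -- q = 2
    have hv2 : padicValNat 2 2 = 1 := padicValNat.self one_lt_two
    have hvp : padicValNat 2 p = 0 :=
      padicValNat.eq_zero_of_not_dvd (fun h => by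
        have := (Nat.prime_dvd_prime_iff_eq Nat.prime_two hp).mp h; omega)
    have hvk : padicValNat 2 k.factorial ≤ 1 := by
      rcases hk with rfl | rfl
      · simp
      · norm_num [hv2]
    have h8 : (3 : ℕ) ≤ padicValNat 2 m.factorial := by
      have hd : (2 : ℕ) ^ 3 ∣ m.factorial := by
        have h9 : (2:ℕ) ^ 3 ∣ Nat.factorial 9 := by norm_num [Nat.factorial]
        exact h9.trans (Nat.factorial_dvd_factorial hm9)
      rcases (padicValNat_dvd_iff 3 m.factorial).mp hd with h | h
      · exact absurd h m.factorial_ne_zero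
      · exact h
    rw [hv2, hvp]
    omega
  rcases eq_or_ne q p with rfl | hqp
  · -- q = p
    have hv2 : padicValNat q 2 = 0 :=
      padicValNat.eq_zero_of_not_dvd (fun h => by
        have := (Nat.le_of_dvd two_pos h); omega)
    have hvp : padicValNat q q = 1 := padicValNat.self hq.one_lt
    have hvk : padicValNat q k.factorial = 0 := by
      apply padicValNat.eq_zero_of_not_dvd
      intro h
      have := Nat.le_of_dvd (Nat.factorial_pos k) h
      rcases hk with rfl | rfl <;> simp [Nat.factorial] at this <;> omega
    have hlog : 2 ≤ Nat.log q m := by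
      rw [Nat.le_log_iff_pow_le hq.one_lt hm0]
      exact hpm
    have hleg : padicValNat q m.factorial = ∑ i ∈ Finset.Ico 1 (Nat.log q m + 1), m / q ^ i :=
      padicValNat_factorial (Nat.lt_succ_self _)
    have hsum : m / q + m / q ^ 2 ≤ padicValNat q m.factorial := by
      rw [hleg]
      have hsub : ({1, 2} : Finset ℕ) ⊆ Finset.Ico 1 (Nat.log q m + 1) := by
        intro i hi
        simp only [Finset.mem_insert, Finset.mem_singleton] at hi
        rw [Finset.mem_Ico]
        omega
      calc m / q + m / q ^ 2 = ∑ i ∈ ({1, 2} : Finset ℕ), m / q ^ i := by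
            rw [Finset.sum_insert (by norm_num), Finset.sum_singleton, pow_one]
        _ ≤ _ := Finset.sum_le_sum_of_subset hsub
    have hdiv1 : m / q = k * q := by
      rw [hm, pow_two, ← mul_assoc]
      exact Nat.mul_div_cancel _ hq.pos
    have hdiv2 : m / q ^ 2 = k := by
      rw [hm]
      exact Nat.mul_div_cancel _ (by positivity)
    have h2k : 2 * k + 1 ≤ padicValNat q m.factorial := by
      rw [hdiv1, hdiv2] at hsum
      have : 2 * k + 1 ≤ k * q + k := by nlinarith
      omega
    rw [hv2, hvp, hvk]
    omega
  · -- q ≠ 2, q ≠ p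
    have hv2 : padicValNat q 2 = 0 :=
      padicValNat.eq_zero_of_not_dvd (fun h => by
        have := (Nat.prime_dvd_prime_iff_eq hq Nat.prime_two).mp h; omega)
    have hvp : padicValNat q p = 0 :=
      padicValNat.eq_zero_of_not_dvd (fun h => by
        exact hqp ((Nat.prime_dvd_prime_iff_eq hq hp).mp h))
    have hvk : padicValNat q k.factorial = 0 := by
      apply padicValNat.eq_zero_of_not_dvd
      intro h
      have := Nat.le_of_dvd (Nat.factorial_pos k) h
      have := hq.two_le
      rcases hk with rfl | rfl <;> simp [Nat.factorial] at * <;> omega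
    rw [hv2, hvp, hvk]
    simp only [Nat.mul_zero, Nat.zero_add, Nat.add_zero]
    rcases lt_or_ge r q with hrq | hqr
    · -- r < q : v_q(r!) = 0 and v_q(n!) ≥ 1
      have hvr : padicValNat q r.factorial = 0 :=
        padicValNat.eq_zero_of_not_dvd (fun h => by
          have := (hq.dvd_factorial).mp h; omega)
      have h1 : 1 ≤ padicValNat q n.factorial := by
        rcases (padicValNat_dvd_iff 1 n.factorial).mp (by simpa using hqn) with h | h
        · exact absurd h n.factorial_ne_zero
        · exact h
      omega
    · -- q ≤ r : use q ∣ m!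
      have h1 : 1 ≤ padicValNat q m.factorial := by
        have hd : q ∣ m.factorial := (hq.dvd_factorial).mpr (by omega)
        rcases (padicValNat_dvd_iff 1 m.factorial).mp (by simpa using hd) with h | h
        · exact absurd h m.factorial_ne_zero
        · exact h
      omega

theorem stmt_11 (n p k r : ℕ) (hn : 9 ≤ n) (hp : p.Prime) (hp2 : p ^ 2 ≤ n)
    (hmax : ∀ q : ℕ, q.Prime → q ^ 2 ≤ n → q ≤ p)
    (hk : k = 1 ∨ k = 2) (hnkr : n = k * p ^ 2 + r) (hr : r < p ^ 2)
    (x : alternatingGroup (Fin n))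
    (hx : (x : Equiv.Perm (Fin n)).cycleType = Multiset.replicate k (p ^ 2)) :
    ∀ q : ℕ, q.Prime → q ∣ Nat.card (alternatingGroup (Fin n)) →
      q ∣ Nat.card (MulAction.orbit (ConjAct (alternatingGroup (Fin n))) x) := by
  classical
  intro q hq hqN
  haveI : Fact q.Prime := ⟨hq⟩
  haveI : Nontrivial (Fin n) := Fin.nontrivial_iff_two_le.mpr (by omega)
  have hp3 : 3 ≤ p := hmax 3 Nat.prime_three (by omega)
  set o := Nat.card (MulAction.orbit (ConjAct (alternatingGroup (Fin n))) x) with ho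
  set s := Nat.card (MulAction.stabilizer (ConjAct (alternatingGroup (Fin n))) x) with hs
  set N := Nat.card (alternatingGroup (Fin n)) with hN
  -- orbit-stabilizer
  have horb : o * s = N := by
    rw [ho, hs, hN,
      Nat.card_congr (MulAction.orbitEquivQuotientStabilizer
        (ConjAct (alternatingGroup (Fin n))) x),
      ← Subgroup.index_eq_card, Subgroup.index_mul_card]
    exact Nat.card_congr ConjAct.ofConjAct.toEquiv
  -- |A_n| = n!/2
  have hcardG : 2 * N = n.factorial := by
    rw [hN, Nat.card_eq_fintype_card, two_mul_card_alternatingGroup, Fintype.card_perm,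
      Fintype.card_fin]
  -- stabilizer embeds in the centralizer of g in Perm (Fin n)
  have hsD : s ∣ (p ^ 2) ^ k * k.factorial * r.factorial := by
    let φ : MulAction.stabilizer (ConjAct (alternatingGroup (Fin n))) x →* Perm (Fin n) :=
      (alternatingGroup (Fin n)).subtype.comp (ConjAct.ofConjAct.toMonoidHom.comp
        (MulAction.stabilizer (ConjAct (alternatingGroup (Fin n))) x).subtype)
    have hφmem : ∀ c : MulAction.stabilizer (ConjAct (alternatingGroup (Fin n))) x,
        φ c ∈ Subgroup.centralizer {(x : Perm (Fin n))} := by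
      intro c
      rw [Subgroup.mem_centralizer_singleton_iff]
      have hc := c.2
      rw [MulAction.mem_stabilizer_iff, ConjAct.smul_def] at hc
      have hc2 : ConjAct.ofConjAct (c : ConjAct (alternatingGroup (Fin n))) * x =
          x * ConjAct.ofConjAct (c : ConjAct (alternatingGroup (Fin n))) :=
        mul_inv_eq_iff_eq_mul.mp hc
      have := congrArg (Subtype.val) hc2
      simpa [φ] using this
    let ψ := φ.codRestrict _ hφmem
    have hψinj : Function.Injective ψ := by
      intro a b hab
      have h1 := Subtype.ext_iff.mp hab
      have h2 : ConjAct.ofConjAct (a : ConjAct (alternatingGroup (Fin n))) =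
          ConjAct.ofConjAct (b : ConjAct (alternatingGroup (Fin n))) := Subtype.ext h1
      exact Subtype.ext (ConjAct.ofConjAct.injective h2)
    have h1 : s ∣ Nat.card (Subgroup.centralizer {(x : Perm (Fin n))}) :=
      Subgroup.card_dvd_of_injective ψ hψinj
    have h2 := centralizer_card_dvd (x : Perm (Fin n)) k (p ^ 2) hx
    rw [Fintype.card_fin] at h2
    have hnr : n - k * p ^ 2 = r := by omega
    rw [hnr] at h2
    exact h1.trans h2
  -- now the arithmetic
  have hNfact : N ∣ n.factorial := ⟨2, by omega⟩
  have hqn : q ∣ n.factorial := hqN.trans hNfact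
  have harith := arith_main n p k r q hp hq hp3 hk hnkr hr hqn
  have hD0 : (p ^ 2) ^ k * k.factorial * r.factorial ≠ 0 := by positivity
  have ho0 : o ≠ 0 := by
    rw [ho]
    refine Nat.card_ne_zero.mpr ⟨⟨x, MulAction.mem_orbit_self x⟩, inferInstance⟩
  have hs0 : s ≠ 0 := by
    rw [hs]
    exact Nat.card_ne_zero.mpr ⟨⟨1, Subgroup.one_mem _⟩, inferInstance⟩
  have hvs : padicValNat q s ≤ padicValNat q ((p ^ 2) ^ k * k.factorial * r.factorial) := by
    obtain ⟨t, ht⟩ := hsD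
    have ht0 : t ≠ 0 := fun h => hD0 (by rw [ht, h, mul_zero])
    rw [ht, padicValNat.mul hs0 ht0]
    exact Nat.le_add_right _ _
  have hvfact : padicValNat q n.factorial =
      padicValNat q 2 + padicValNat q o + padicValNat q s := by
    rw [← hcardG, ← horb, padicValNat.mul two_ne_zero (by positivity),
      padicValNat.mul ho0 hs0]
    ring
  have hvo : 1 ≤ padicValNat q o := by omega
  have hdvd := (padicValNat_dvd_iff 1 o).mpr (Or.inr hvo)
  simpa using hdvd
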